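/- If Q is a real quadratic form and L a nonzero linear form on ℝ^d such that Q + βL² is positive definite for some β ∈ ℝ, then (0,0) is not an accumulation point of {(Q(x), L(x)) : x ∈ ℤ^d \ {0}}; in particular the set {(Q(x), L(x)) : x ∈ ℤ^d} is not dense in ℝ². -/

import Mathlib

open Filter

theorem aux_min (d : ℕ) (hd : 0 < d)
    (Q : QuadraticForm ℝ (Fin d → ℝ)) (L : (Fin d → ℝ) →ₗ[ℝ] ℝ) (β : ℝ)
    (hpos : ∀ x : Fin d → ℝ, x ≠ 0 → 0 < Q x + β * (L x) ^ 2) :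
    ∃ m > 0, ∀ x : Fin d → ℝ, 1 ≤ ‖x‖ → m ≤ Q x + β * (L x) ^ 2 := by
  have hQc : Continuous fun x => Q x := by
    have h : ∀ x, Q x = (QuadraticMap.associated (R := ℝ) Q) x x := fun x =>
      (QuadraticMap.associated_eq_self_apply ℝ Q x).symm
    simp_rw [h]
    set B := QuadraticMap.associated (R := ℝ) Q
    let g : (Fin d → ℝ) →ₗ[ℝ] ((Fin d → ℝ) →L[ℝ] ℝ) :=
      (LinearMap.toContinuousLinearMap : ((Fin d → ℝ) →ₗ[ℝ] ℝ) ≃ₗ[ℝ] _).toLinearMap ∘ₗ B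
    have hg : Continuous g := g.continuous_of_finiteDimensional
    have : ∀ x, (B x) x = (g x) x := fun x => rfl
    simp_rw [this]
    exact hg.clm_apply continuous_id
  have hf : Continuous fun x => Q x + β * (L x) ^ 2 :=
    hQc.add (continuous_const.mul ((L.continuous_of_finiteDimensional).pow 2))
  haveI : Nonempty (Fin d) := ⟨⟨0, hd⟩⟩
  have hsph : (Metric.sphere (0 : Fin d → ℝ) 1).Nonempty :=
    NormedSpace.sphere_nonempty.2 zero_le_one
  obtain ⟨u, hu, hmin⟩ := (isCompact_sphere (0 : Fin d → ℝ) 1).exists_isMinOn hsph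
    (hf.continuousOn)
  have hu1 : ‖u‖ = 1 := by simpa using hu
  have hune : u ≠ 0 := by intro h; rw [h] at hu1; simp at hu1
  refine ⟨Q u + β * (L u) ^ 2, hpos u hune, fun x hx => ?_⟩
  have hxne : x ≠ 0 := by
    intro h; rw [h] at hx; simp at hx; linarith
  set c := ‖x‖ with hc
  have hc0 : 0 < c := lt_of_lt_of_le one_pos hx
  have hv : ‖c⁻¹ • x‖ = 1 := by
    rw [norm_smul, norm_inv, norm_norm, inv_mul_cancel₀ (ne_of_gt hc0)]
  have hvs : c⁻¹ • x ∈ Metric.sphere (0 : Fin d → ℝ) 1 := by simpa using hv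
  have key := hmin hvs
  have hxval : Q x + β * (L x) ^ 2 = c ^ 2 * (Q (c⁻¹ • x) + β * (L (c⁻¹ • x)) ^ 2) := by
    have h1 : Q (c⁻¹ • x) = c⁻¹ * c⁻¹ * Q x := by
      simpa [smul_eq_mul] using QuadraticMap.map_smul Q c⁻¹ x
    have h2 : L (c⁻¹ • x) = c⁻¹ * L x := by simp
    rw [h1, h2]
    field_simp
  rw [hxval]
  have h1le : 1 ≤ c ^ 2 := one_le_pow₀ hx
  have hval0 : 0 < Q (c⁻¹ • x) + β * (L (c⁻¹ • x)) ^ 2 := hpos _ (by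
    intro h; rw [h] at hv; simp at hv)
  calc Q u + β * (L u) ^ 2 ≤ Q (c⁻¹ • x) + β * (L (c⁻¹ • x)) ^ 2 := key
    _ = 1 * (Q (c⁻¹ • x) + β * (L (c⁻¹ • x)) ^ 2) := (one_mul _).symm
    _ ≤ c ^ 2 * (Q (c⁻¹ • x) + β * (L (c⁻¹ • x)) ^ 2) := by
        exact mul_le_mul_of_nonneg_right h1le hval0.le

/-- If `Q + βL²` is positive definite for some `β`, then `(0,0)` is not an accumulation
point of `{(Q(x), L(x)) : x ∈ ℤ^d, x ≠ 0}`, and `{(Q(x), L(x)) : x ∈ ℤ^d}` is not dense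
in `ℝ²`. -/
theorem stmt_7 (d : ℕ)
    (Q : QuadraticForm ℝ (Fin d → ℝ))
    (L : (Fin d → ℝ) →ₗ[ℝ] ℝ) (hL : L ≠ 0)
    (β : ℝ)
    (hpos : ∀ x : Fin d → ℝ, x ≠ 0 → 0 < Q x + β * (L x) ^ 2) :
    ¬ AccPt ((0 : ℝ), (0 : ℝ))
        (𝓟 {p : ℝ × ℝ | ∃ x : Fin d → ℤ, x ≠ 0 ∧
          p = (Q (fun i => (x i : ℝ)), L (fun i => (x i : ℝ)))}) ∧
    ¬ Dense {p : ℝ × ℝ | ∃ x : Fin d → ℤ,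
          p = (Q (fun i => (x i : ℝ)), L (fun i => (x i : ℝ)))} := by
  have hd : 0 < d := by
    rcases Nat.eq_zero_or_pos d with h | h
    · exfalso; apply hL
      subst h
      apply LinearMap.ext; intro x
      have : x = 0 := Subsingleton.elim x 0
      rw [this, map_zero]; simp
    · exact h
  obtain ⟨m, hm, hmin⟩ := aux_min d hd Q L β hpos
  set ε : ℝ := min 1 (m / (2 * (1 + |β|))) with hε
  have hβ1 : 0 < 1 + |β| := by positivity
  have hε0 : 0 < ε := lt_min one_pos (by positivity)
  have hε1 : ε ≤ 1 := min_le_left _ _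
  have hε2 : ε ≤ m / (2 * (1 + |β|)) := min_le_right _ _
  -- key estimate
  have hkey : ∀ a b : ℝ, |a| < ε → |b| < ε → a + β * b ^ 2 < m := by
    intro a b ha hb
    have h1 : a < ε := lt_of_le_of_lt (le_abs_self a) ha
    have h2 : b ^ 2 < ε ^ 2 := by
      have := abs_nonneg b
      nlinarith [sq_abs b]
    have h3 : β * b ^ 2 ≤ |β| * b ^ 2 := by
      apply mul_le_mul_of_nonneg_right (le_abs_self β) (sq_nonneg b)
    have h4 : ε * (2 * (1 + |β|)) ≤ m := by
      rw [← le_div_iff₀ (by positivity)]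
      exact hε2
    have habs : 0 ≤ |β| := abs_nonneg β
    nlinarith [sq_nonneg b, sq_nonneg ε]
  -- lower bound at nonzero integer points
  have hint : ∀ x : Fin d → ℤ, x ≠ 0 →
      m ≤ Q (fun i => (x i : ℝ)) + β * (L (fun i => (x i : ℝ))) ^ 2 := by
    intro x hx
    apply hmin
    obtain ⟨i, hi⟩ := Function.ne_iff.1 hx
    have h1 : (1 : ℝ) ≤ |(x i : ℝ)| := by
      have : (1 : ℤ) ≤ |x i| := Int.one_le_abs (by simpa using hi)
      calc (1 : ℝ) = ((1 : ℤ) : ℝ) := by norm_num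
        _ ≤ ((|x i| : ℤ) : ℝ) := by exact_mod_cast this
        _ = |(x i : ℝ)| := by push_cast; ring
    calc (1 : ℝ) ≤ |(x i : ℝ)| := h1
      _ = ‖(fun j => (x j : ℝ)) i‖ := by simp [Real.norm_eq_abs]
      _ ≤ ‖(fun j => (x j : ℝ))‖ := norm_le_pi_norm (fun j => ((x j : ℝ))) i
  constructor
  · intro hacc
    rw [accPt_iff_nhds] at hacc
    obtain ⟨y, ⟨hyball, x, hx0, hxy⟩, -⟩ :=
      hacc (Metric.ball ((0:ℝ),(0:ℝ)) ε) (Metric.ball_mem_nhds _ hε0)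
    have hy1 : |y.1| < ε := by
      have := hyball
      rw [Metric.mem_ball, Prod.dist_eq] at this
      have := lt_of_le_of_lt (le_max_left _ _) this
      simpa [Real.dist_eq] using this
    have hy2 : |y.2| < ε := by
      have := hyball
      rw [Metric.mem_ball, Prod.dist_eq] at this
      have := lt_of_le_of_lt (le_max_right _ _) this
      simpa [Real.dist_eq] using this
    have hlt : y.1 + β * y.2 ^ 2 < m := hkey _ _ hy1 hy2
    have hge : m ≤ y.1 + β * y.2 ^ 2 := by
      rw [hxy]; exact hint x hx0
    linarith
  · intro hdense
    have hball : (Metric.ball ((0:ℝ), ε/2) (ε/4)).Nonempty :=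
      Metric.nonempty_ball.2 (by positivity)
    obtain ⟨p, hpS, hpB⟩ := hdense.exists_mem_open Metric.isOpen_ball hball
    rw [Metric.mem_ball, Prod.dist_eq] at hpB
    have hp1 : |p.1| < ε / 4 := by
      have := lt_of_le_of_lt (le_max_left _ _) hpB
      simpa [Real.dist_eq] using this
    have hp2 : |p.2 - ε/2| < ε / 4 := by
      have := lt_of_le_of_lt (le_max_right _ _) hpB
      simpa [Real.dist_eq] using this
    obtain ⟨x, hxp⟩ := hpS
    rcases eq_or_ne x 0 with rfl | hx0
    · -- p = (0, 0), contradiction with hp2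
      have h0 : (fun i => (((0 : Fin d → ℤ) i : ℝ))) = (0 : Fin d → ℝ) := by
        funext i; simp
      have : p.2 = 0 := by rw [hxp]; simp only [h0, map_zero]
      rw [this] at hp2
      rw [abs_sub_comm, abs_of_nonneg (by linarith : (0:ℝ) ≤ ε/2 - 0)] at hp2
      linarith
    · have hge : m ≤ p.1 + β * p.2 ^ 2 := by rw [hxp]; exact hint x hx0
      have h1 : |p.1| < ε := lt_of_lt_of_le hp1 (by linarith)
      have h2 : |p.2| < ε := by
        have := abs_sub_abs_le_abs_sub p.2 (ε/2)
        have hh : |(ε/2 : ℝ)| = ε/2 := abs_of_nonneg (by linarith)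
        calc |p.2| ≤ |p.2 - ε/2| + |ε/2| := by
              have := abs_sub_le p.2 (ε/2) 0
              simpa using this
          _ < ε/4 + ε/2 := by rw [hh]; linarith
          _ ≤ ε := by linarith
      have := hkey _ _ h1 h2
      linarith
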